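/- For unit vectors x, y ∈ ℍ^d with x^*y ≠ 0, the 3×3 cross-Gramian G_{xy} with entries ⟨xux^*, yvy^*⟩ for u,v ∈ {i,j,k} satisfies G_{xy}^⊤ G_{xy} = |x^*y|⁴ · I₃. Consequently, if unit vectors {x_k}_{k∈[n]} in ℍ^d are equiangular (|x_k^* x_ℓ|² is constant over k ≠ ℓ), then the subspaces {S(x_k)}_{k∈[n]} are equi-isoclinic. -/

import Mathlib

open Matrix BigOperators

/-- The quaternion units `i, j, k`. -/
def qunit : Fin 3 → Quaternion ℝ := ![⟨0,1,0,0⟩, ⟨0,0,1,0⟩, ⟨0,0,0,1⟩]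

/-- The matrix `x z x^*` for `x ∈ ℍ^d`, `z ∈ ℍ`. -/
noncomputable def xzxStar {d : ℕ} (x : Fin d → Quaternion ℝ) (z : Quaternion ℝ) :
    Matrix (Fin d) (Fin d) (Quaternion ℝ) :=
  fun i j => x i * z * star (x j)

/-- The real inner product `⟨A,B⟩ = Re tr(A^*B)` on `ℍ^{d×d}`. -/
noncomputable def qmInner {d : ℕ} (A B : Matrix (Fin d) (Fin d) (Quaternion ℝ)) : ℝ :=
  (Matrix.trace (Aᴴ * B)).re

/-- The quaternionic inner product `x^*y = ∑ᵢ x̄ᵢ yᵢ`. -/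
noncomputable def qvInner {d : ℕ} (x y : Fin d → Quaternion ℝ) : Quaternion ℝ :=
  ∑ i, star (x i) * y i

/-- The `3×3` cross-Gramian of `S(x)` and `S(y)`, with entries
`⟨xux^*, yvy^*⟩` for `u, v ∈ {i,j,k}`. -/
noncomputable def crossGram {d : ℕ} (x y : Fin d → Quaternion ℝ) : Matrix (Fin 3) (Fin 3) ℝ :=
  fun a b => qmInner (xzxStar x (qunit a)) (xzxStar y (qunit b))

lemma re_mul_comm (a b : Quaternion ℝ) : (a*b).re = (b*a).re := by
  simp [Quaternion.re_mul]; ring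

lemma re_sum {ι : Type*} {s : Finset ι} (f : ι → Quaternion ℝ) :
    (∑ i ∈ s, f i).re = ∑ i ∈ s, (f i).re := by
  classical
  induction s using Finset.induction_on with
  | empty => simp; rfl
  | insert h ih => simp_all

lemma star_qvInner {d : ℕ} (x y : Fin d → Quaternion ℝ) :
    star (qvInner x y) = ∑ i, star (y i) * x i := by
  unfold qvInner
  rw [star_sum]
  exact Finset.sum_congr rfl fun i _ => by rw [StarMul.star_mul, star_star]

lemma qmInner_eq {d : ℕ} (x y : Fin d → Quaternion ℝ) (u v : Quaternion ℝ) :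
    qmInner (xzxStar x u) (xzxStar y v)
      = (star u * qvInner x y * v * star (qvInner x y)).re := by
  unfold qmInner
  rw [Matrix.trace]
  simp only [Matrix.diag_apply, Matrix.mul_apply, Matrix.conjTranspose_apply,
    StarMul.star_mul, star_star, xzxStar]
  have step1 : ∀ i : Fin d,
      (∑ j, x i * (star u * star (x j)) * (y j * v * star (y i)))
        = x i * ((star u * qvInner x y * v) * star (y i)) := by
    intro i
    rw [qvInner]
    simp only [Finset.sum_mul, Finset.mul_sum]
    exact Finset.sum_congr rfl fun j _ => by simp [mul_assoc]
  rw [Finset.sum_congr rfl fun i _ => step1 i, re_sum]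
  have step2 : ∀ i : Fin d,
      (x i * ((star u * qvInner x y * v) * star (y i))).re
        = ((star u * qvInner x y * v) * (star (y i) * x i)).re := by
    intro i
    rw [re_mul_comm, mul_assoc]
  rw [Finset.sum_congr rfl fun i _ => step2 i, ← re_sum, ← Finset.mul_sum,
    ← star_qvInner]

lemma main_identity {d : ℕ} (x y : Fin d → Quaternion ℝ) :
    (crossGram x y)ᵀ * crossGram x y
      = ((Quaternion.normSq (qvInner x y)) ^ 2) • (1 : Matrix (Fin 3) (Fin 3) ℝ) := by
  set q := qvInner x y with hq
  ext b c
  rw [Matrix.mul_apply]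
  simp only [Matrix.transpose_apply, crossGram, qmInner_eq, ← hq,
    Matrix.smul_apply, Matrix.one_apply, smul_eq_mul]
  fin_cases b <;> fin_cases c <;>
    simp only [Quaternion.re_mul, Quaternion.imI_mul, Quaternion.imJ_mul, Quaternion.imK_mul,
      Quaternion.re_star, Quaternion.imI_star, Quaternion.imJ_star, Quaternion.imK_star] <;>
    simp [qunit, Fin.sum_univ_three, Quaternion.normSq_def', Quaternion.re_mul,
      Quaternion.imI_mul, Quaternion.imJ_mul, Quaternion.imK_mul] <;> ring

/-- Theorem 4.4(a): for unit `x, y` with `x^*y ≠ 0`, the cross-Gramian satisfies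
`G^⊤G = |x^*y|⁴ I₃`; consequently an equiangular family of unit vectors in `ℍ^d`
yields equi-isoclinic subspaces `S(xₖ)`. -/
theorem equiangular_gives_equiisoclinic (d : ℕ) :
    (∀ x y : Fin d → Quaternion ℝ,
        qvInner x x = 1 → qvInner y y = 1 → qvInner x y ≠ 0 →
        (crossGram x y)ᵀ * crossGram x y
          = ((Quaternion.normSq (qvInner x y)) ^ 2) •
              (1 : Matrix (Fin 3) (Fin 3) ℝ)) ∧
    (∀ n : ℕ, ∀ xs : Fin n → Fin d → Quaternion ℝ,
        (∀ k, qvInner (xs k) (xs k) = 1) →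
        (∃ c : ℝ, ∀ k ℓ, k ≠ ℓ → Quaternion.normSq (qvInner (xs k) (xs ℓ)) = c) →
        ∃ α : ℝ, 0 ≤ α ∧ ∀ k ℓ, k ≠ ℓ →
          (crossGram (xs k) (xs ℓ))ᵀ * crossGram (xs k) (xs ℓ)
            = α • (1 : Matrix (Fin 3) (Fin 3) ℝ)) := by
  constructor
  · intro x y _ _ _
    exact main_identity x y
  · intro n xs _ hc
    obtain ⟨c, hc⟩ := hc
    refine ⟨c ^ 2, by positivity, fun k ℓ h => ?_⟩
    rw [main_identity, hc k ℓ h]
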